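/- Let 1 ≤ n ≤ m be integers with n dividing m, and let G = ℤ_n ⊕ ℤ_m. Then the number N of orbits of Aut(G) acting componentwise on the set of generating pairs of G equals the Dedekind totient ψ(m/n); equivalently, N · ∏_{p prime, p | (m/n)} p = (m/n) · ∏_{p prime, p | (m/n)} (p + 1). -/

import Mathlib

open Finset

noncomputable section

/-- number of unimodular pairs mod k -/
def UU (k : ℕ) : ℕ := Nat.card {v : ZMod k × ZMod k // IsCoprime v.1 v.2}

lemma isCoprime_of_isUnit_left {R : Type*} [CommRing R] {x y : R} (h : IsUnit x) :
    IsCoprime x y := by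
  obtain ⟨u, rfl⟩ := h
  exact ⟨(↑u⁻¹ : R), 0, by simp⟩

lemma isCoprime_prod_iff {R S : Type*} [CommRing R] [CommRing S] (x y : R × S) :
    IsCoprime x y ↔ IsCoprime x.1 y.1 ∧ IsCoprime x.2 y.2 := by
  constructor
  · intro h
    exact ⟨h.map (RingHom.fst R S), h.map (RingHom.snd R S)⟩
  · rintro ⟨⟨a₁, b₁, h₁⟩, ⟨a₂, b₂, h₂⟩⟩
    exact ⟨(a₁, a₂), (b₁, b₂), by
      ext <;> simpa⟩

def unitsEquivIsUnit (M : Type*) [Monoid M] : Mˣ ≃ {x : M // IsUnit x} where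
  toFun u := ⟨u, u.isUnit⟩
  invFun x := x.2.unit
  left_inv u := by ext; simp
  right_inv x := by ext; simp

lemma card_nonunits (q : ℕ) [NeZero q] :
    Nat.card {x : ZMod q // ¬ IsUnit x} = q - q.totient := by
  classical
  rw [Nat.card_eq_fintype_card, Fintype.card_subtype_compl]
  congr 1
  · exact ZMod.card q
  · rw [← ZMod.card_units_eq_totient q]
    exact Fintype.card_congr (unitsEquivIsUnit (ZMod q)).symm

lemma isCoprime_iff_isUnit_or_isUnit {p e : ℕ} (hp : p.Prime) (he : e ≠ 0)
    (x y : ZMod (p ^ e)) : IsCoprime x y ↔ IsUnit x ∨ IsUnit y := by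
  haveI : Fact p.Prime := ⟨hp⟩
  haveI : NeZero (p ^ e) := ⟨pow_ne_zero e hp.pos.ne'⟩
  constructor
  · rintro ⟨a, b, hab⟩
    by_contra hc
    push_neg at hc
    obtain ⟨hx, hy⟩ := hc
    have hdvd : (p : ℕ) ∣ p ^ e := dvd_pow_self p he
    -- nonunit means p divides val
    have keyx : (p : ℕ) ∣ x.val := by
      by_contra hpx
      exact hx (by
        have := (ZMod.isUnit_iff_coprime x.val (p ^ e)).mpr
          (Nat.Coprime.pow_right _ ((Nat.Prime.coprime_iff_not_dvd hp).mpr hpx).symm)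
        rwa [ZMod.natCast_val, ZMod.cast_id] at this)
    have keyy : (p : ℕ) ∣ y.val := by
      by_contra hpy
      exact hy (by
        have := (ZMod.isUnit_iff_coprime y.val (p ^ e)).mpr
          (Nat.Coprime.pow_right _ ((Nat.Prime.coprime_iff_not_dvd hp).mpr hpy).symm)
        rwa [ZMod.natCast_val, ZMod.cast_id] at this)
    have f := ZMod.castHom hdvd (ZMod p)
    have hx0 : (ZMod.castHom hdvd (ZMod p)) x = 0 := by
      rw [← ZMod.natCast_rightInverse x, map_natCast, ZMod.natCast_eq_zero_iff]
      exact keyx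
    have hy0 : (ZMod.castHom hdvd (ZMod p)) y = 0 := by
      rw [← ZMod.natCast_rightInverse y, map_natCast, ZMod.natCast_eq_zero_iff]
      exact keyy
    have := congrArg (ZMod.castHom hdvd (ZMod p)) hab
    rw [map_add, map_mul, map_mul, map_one, hx0, hy0, mul_zero, mul_zero, add_zero] at this
    exact zero_ne_one this
  · rintro (h | h)
    · exact isCoprime_of_isUnit_left h
    · exact (isCoprime_of_isUnit_left h).symm

lemma UU_prime_pow {p e : ℕ} (hp : p.Prime) (he : e ≠ 0) :
    UU (p ^ e) = p ^ (2 * e) - p ^ (2 * e - 2) := by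
  classical
  haveI : Fact p.Prime := ⟨hp⟩
  haveI : NeZero (p ^ e) := ⟨pow_ne_zero e hp.pos.ne'⟩
  have h1 : UU (p ^ e) =
      Nat.card {v : ZMod (p ^ e) × ZMod (p ^ e) // ¬ (¬ IsUnit v.1 ∧ ¬ IsUnit v.2)} := by
    unfold UU
    apply Nat.card_congr
    apply Equiv.subtypeEquivRight
    intro v
    rw [isCoprime_iff_isUnit_or_isUnit hp he]
    tauto
  rw [h1, Nat.card_eq_fintype_card, Fintype.card_subtype_compl]
  have h2 : Fintype.card {v : ZMod (p ^ e) × ZMod (p ^ e) // ¬ IsUnit v.1 ∧ ¬ IsUnit v.2}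
      = (p ^ e - (p^e).totient) * (p ^ e - (p^e).totient) := by
    rw [Fintype.card_congr (Equiv.subtypeProdEquivProd
      (p := fun x : ZMod (p^e) => ¬ IsUnit x) (q := fun x : ZMod (p^e) => ¬ IsUnit x)),
      Fintype.card_prod]
    rw [← Nat.card_eq_fintype_card, card_nonunits]
  rw [h2]
  have hcard : Fintype.card (ZMod (p ^ e) × ZMod (p ^ e)) = p ^ e * p ^ e := by
    rw [Fintype.card_prod, ZMod.card]
  rw [hcard]
  have htot : p ^ e - (p^e).totient = p ^ (e - 1) := by
    rw [Nat.totient_prime_pow hp (Nat.pos_of_ne_zero he)]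
    have : p ^ e = p ^ (e-1) * p := by
      rw [← pow_succ]
      congr 1
      omega
    rw [this, ← Nat.mul_sub]
    have h3 : p - (p - 1) = 1 := by
      have := hp.one_lt
      omega
    rw [h3, mul_one]
  rw [htot]
  have he2 : p ^ e * p ^ e = p ^ (2 * e) := by
    rw [← pow_add]; congr 1; omega
  have he3 : p ^ (e - 1) * p ^ (e - 1) = p ^ (2 * e - 2) := by
    rw [← pow_add]; congr 1; omega
  rw [he2, he3]

lemma UU_mul {a b : ℕ} (hab : Nat.Coprime a b) : UU (a * b) = UU a * UU b := by
  unfold UU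
  have e := ZMod.chineseRemainder hab
  have E1 : {v : ZMod (a*b) × ZMod (a*b) // IsCoprime v.1 v.2} ≃
      {w : (ZMod a × ZMod b) × (ZMod a × ZMod b) // IsCoprime w.1 w.2} := by
    apply Equiv.subtypeEquiv (e.toEquiv.prodCongr e.toEquiv)
    intro v
    constructor
    · intro h; exact h.map e.toRingHom
    · intro h
      have := h.map e.symm.toRingHom
      simpa using this
  have E2 : {w : (ZMod a × ZMod b) × (ZMod a × ZMod b) // IsCoprime w.1 w.2} ≃
      {u : ZMod a × ZMod a // IsCoprime u.1 u.2} × {u : ZMod b × ZMod b // IsCoprime u.1 u.2} :=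
    ((Equiv.prodProdProdComm (ZMod a) (ZMod b) (ZMod a) (ZMod b)).subtypeEquiv
      (p := fun w => IsCoprime w.1 w.2)
      (q := fun u => IsCoprime u.1.1 u.1.2 ∧ IsCoprime u.2.1 u.2.2)
      (fun w => isCoprime_prod_iff w.1 w.2)).trans
      (Equiv.subtypeProdEquivProd (p := fun u : ZMod a × ZMod a => IsCoprime u.1 u.2)
        (q := fun u : ZMod b × ZMod b => IsCoprime u.1 u.2))
  rw [Nat.card_congr (E1.trans E2), Nat.card_prod]

lemma UU_zero : UU 0 = 0 := by
  have : Infinite {v : ZMod 0 × ZMod 0 // IsCoprime v.1 v.2} := by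
    apply Infinite.of_injective (fun c : ℤ => (⟨((1 : ZMod 0), (c : ZMod 0)), isCoprime_one_left⟩ :
      {v : ZMod 0 × ZMod 0 // IsCoprime v.1 v.2}))
    intro c d h
    exact congrArg (fun x => x.1.2) h
  exact Nat.card_eq_zero_of_infinite

lemma UU_one : UU 1 = 1 := by
  haveI : Unique {v : ZMod 1 × ZMod 1 // IsCoprime v.1 v.2} := by
    refine ⟨⟨⟨(0, 0), ⟨0, 0, Subsingleton.elim _ _⟩⟩⟩, ?_⟩
    intro x
    apply Subtype.ext
    apply Subsingleton.elim
  exact Nat.card_unique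

theorem keyArith (k : ℕ) :
    UU k * ∏ p ∈ k.primeFactors, p = k.totient * (k * ∏ p ∈ k.primeFactors, (p + 1)) := by
  induction k using Nat.recOnPosPrimePosCoprime with
  | prime_pow p e hp he =>
      rw [UU_prime_pow hp he.ne', Nat.primeFactors_prime_pow he.ne' hp,
        Nat.totient_prime_pow hp he, Finset.prod_singleton, Finset.prod_singleton]
      have h1 : p ^ (2*e) - p ^ (2*e-2) = p ^ (2*e-2) * (p * p - 1) := by
        rw [Nat.mul_sub, mul_one]
        rw [show p * p = p ^ 2 by ring, ← pow_add, show 2*e-2+2 = 2*e by omega]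
      rw [h1]
      have h2 : p ^ (2*e-2) * (p * p - 1) * p = (p ^ (e-1) * (p-1)) * (p ^ e * (p+1)) := by
        have hpp : p * p - 1 = (p - 1) * (p + 1) := by
          have := hp.one_lt
          cases p with
          | zero => omega
          | succ q => simp [Nat.succ_sub_one]; ring_nf; omega
        rw [hpp]
        have hee : p ^ (2*e-2) * p = p ^ (e-1) * p ^ e := by
          rw [← pow_succ, ← pow_add]
          congr 1
          omega
        calc p ^ (2*e-2) * ((p-1) * (p+1)) * p
            = (p ^ (2*e-2) * p) * ((p-1) * (p+1)) := by ring
          _ = (p ^ (e-1) * p ^ e) * ((p-1) * (p+1)) := by rw [hee]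
          _ = (p ^ (e-1) * (p-1)) * (p ^ e * (p+1)) := by ring
      rw [h2]
  | zero => simp [UU_zero]
  | one => simp [UU_one]
  | coprime a b ha hb hab iha ihb =>
      have ha0 : a ≠ 0 := by omega
      have hb0 : b ≠ 0 := by omega
      rw [UU_mul hab, Nat.totient_mul hab, Nat.primeFactors_mul ha0 hb0,
        Finset.prod_union hab.disjoint_primeFactors,
        Finset.prod_union hab.disjoint_primeFactors]
      calc UU a * UU b * ((∏ p ∈ a.primeFactors, p) * ∏ p ∈ b.primeFactors, p)
          = (UU a * ∏ p ∈ a.primeFactors, p) * (UU b * ∏ p ∈ b.primeFactors, p) := by ring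
        _ = (a.totient * (a * ∏ p ∈ a.primeFactors, (p+1))) *
            (b.totient * (b * ∏ p ∈ b.primeFactors, (p+1))) := by rw [iha, ihb]
        _ = a.totient * b.totient *
            (a * b * ((∏ p ∈ a.primeFactors, (p+1)) * ∏ p ∈ b.primeFactors, (p+1))) := by ring


noncomputable section P2

variable (n m k : ℕ)

def iotaH (hm : n * k = m) : ZMod k →+ ZMod m :=
  ZMod.lift k ⟨AddMonoidHom.mk' (fun c : ℤ => ((n * c : ℤ) : ZMod m))
      (by intro a b; push_cast; ring),
    by
      simp only [AddMonoidHom.mk'_apply]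
      have h2 : ((n : ℤ) * (k : ℤ)) = (m : ℤ) := by exact_mod_cast hm
      rw [h2]
      exact (ZMod.intCast_zmod_eq_zero_iff_dvd m m).mpr dvd_rfl⟩

lemma iotaH_intCast (hm : n * k = m) (c : ℤ) :
    iotaH n m k hm ((c : ℤ) : ZMod k) = ((n * c : ℤ) : ZMod m) := by
  unfold iotaH
  rw [ZMod.lift_coe]
  rfl

lemma iotaH_inj (hm : n * k = m) (hn : n ≠ 0) : Function.Injective (iotaH n m k hm) := by
  intro a b hab
  obtain ⟨A, rfl⟩ := ZMod.intCast_surjective a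
  obtain ⟨B, rfl⟩ := ZMod.intCast_surjective b
  rw [iotaH_intCast, iotaH_intCast] at hab
  have h0 : ((n * A - n * B : ℤ) : ZMod m) = 0 := by
    push_cast at hab ⊢
    rw [sub_eq_zero]
    exact hab
  have hd : ((m : ℤ)) ∣ (n * A - n * B) := (ZMod.intCast_zmod_eq_zero_iff_dvd _ m).mp h0
  have hm' : (m : ℤ) = (n : ℤ) * (k : ℤ) := by exact_mod_cast hm.symm
  rw [hm'] at hd
  have h2 : (n : ℤ) * (k : ℤ) ∣ (n : ℤ) * (A - B) := by
    convert hd using 1; ring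
  have hk : (k : ℤ) ∣ (A - B) :=
    (mul_dvd_mul_iff_left (by exact_mod_cast hn : (n : ℤ) ≠ 0)).mp h2
  have h3 : ((A - B : ℤ) : ZMod k) = 0 := (ZMod.intCast_zmod_eq_zero_iff_dvd _ k).mpr hk
  push_cast at h3 ⊢
  rw [sub_eq_zero] at h3
  exact h3

def castK (hm : n * k = m) : ZMod m →+* ZMod k :=
  ZMod.castHom (show k ∣ m from ⟨n, by rw [← hm]; ring⟩) (ZMod k)

lemma mul_iotaH (hm : n * k = m) (r : ZMod m) (a : ZMod k) :
    r * iotaH n m k hm a = iotaH n m k hm (castK n m k hm r * a) := by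
  obtain ⟨C, rfl⟩ := ZMod.intCast_surjective r
  obtain ⟨D, rfl⟩ := ZMod.intCast_surjective a
  have h1 : castK n m k hm ((C : ℤ) : ZMod m) = ((C : ℤ) : ZMod k) := map_intCast _ C
  rw [h1, show ((C : ℤ) : ZMod k) * ((D : ℤ) : ZMod k) = ((C * D : ℤ) : ZMod k) by push_cast; ring,
    iotaH_intCast, iotaH_intCast]
  push_cast
  ring

-- fiber counting
variable (hm : n * k = m)

def rho (v : {v : ZMod k × ZMod k // IsCoprime v.1 v.2}) :
    Submodule (ZMod m) (ZMod m × ZMod m) :=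
  Submodule.span (ZMod m) {(iotaH n m k hm v.1.1, iotaH n m k hm v.1.2)}

lemma mem_rho_iff (hn : n ≠ 0) [NeZero k] (v : {v : ZMod k × ZMod k // IsCoprime v.1 v.2}) (a b : ZMod k) :
    (iotaH n m k hm a, iotaH n m k hm b) ∈ rho n m k hm v ↔
      ∃ c : ZMod k, a = c * v.1.1 ∧ b = c * v.1.2 := by
  unfold rho
  rw [Submodule.mem_span_singleton]
  constructor
  · rintro ⟨r, hr⟩
    rw [Prod.smul_def, smul_eq_mul, smul_eq_mul, mul_iotaH, mul_iotaH] at hr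
    have h1 := congrArg Prod.fst hr
    have h2 := congrArg Prod.snd hr
    simp only at h1 h2
    exact ⟨castK n m k hm r, (iotaH_inj n m k hm hn h1).symm, (iotaH_inj n m k hm hn h2).symm⟩
  · rintro ⟨c, rfl, rfl⟩
    refine ⟨((c.val : ℕ) : ZMod m), ?_⟩
    have hc : castK n m k hm ((c.val : ℕ) : ZMod m) = c := by
      rw [map_natCast]
      exact ZMod.natCast_rightInverse c
    rw [Prod.smul_def, smul_eq_mul, smul_eq_mul, mul_iotaH, mul_iotaH, hc]

lemma rho_gen_mem (v : {v : ZMod k × ZMod k // IsCoprime v.1 v.2}) :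
    (iotaH n m k hm v.1.1, iotaH n m k hm v.1.2) ∈ rho n m k hm v :=
  Submodule.mem_span_singleton_self _

lemma rho_smul_eq (hn : n ≠ 0) [NeZero k] (v : {v : ZMod k × ZMod k // IsCoprime v.1 v.2}) (c : ZMod k)
    (w : {v : ZMod k × ZMod k // IsCoprime v.1 v.2})
    (h1 : w.1.1 = c * v.1.1) (h2 : w.1.2 = c * v.1.2) :
    rho n m k hm w ≤ rho n m k hm v := by
  unfold rho
  rw [Submodule.span_le, Set.singleton_subset_iff]
  rw [h1, h2]
  exact (mem_rho_iff n m k hm hn v _ _).mpr ⟨c, rfl, rfl⟩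

lemma unit_of_coprime_mul {c x y : ZMod k} (h : IsCoprime (c * x) (c * y)) : IsUnit c := by
  obtain ⟨A, B, hab⟩ := h
  exact IsUnit.of_mul_eq_one (A * x + B * y) (by linear_combination hab)

lemma rho_eq_iff (hn : n ≠ 0) [NeZero k] (v w : {v : ZMod k × ZMod k // IsCoprime v.1 v.2}) :
    rho n m k hm w = rho n m k hm v ↔ ∃ c : (ZMod k)ˣ, w.1.1 = c * v.1.1 ∧ w.1.2 = c * v.1.2 := by
  constructor
  · intro h
    have hmem : (iotaH n m k hm w.1.1, iotaH n m k hm w.1.2) ∈ rho n m k hm v := by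
      rw [← h]; exact rho_gen_mem n m k hm w
    obtain ⟨c, hc1, hc2⟩ := (mem_rho_iff n m k hm hn v _ _).mp hmem
    have hcu : IsUnit c := by
      apply unit_of_coprime_mul k (x := v.1.1) (y := v.1.2)
      rw [← hc1, ← hc2]
      exact w.2
    exact ⟨hcu.unit, by rw [IsUnit.unit_spec]; exact hc1, by rw [IsUnit.unit_spec]; exact hc2⟩
  · rintro ⟨c, h1, h2⟩
    apply le_antisymm
    · exact rho_smul_eq n m k hm hn v c w h1 h2
    · apply rho_smul_eq n m k hm hn w (↑c⁻¹)
      · rw [h1, ← mul_assoc, Units.inv_mul, one_mul]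
      · rw [h2, ← mul_assoc, Units.inv_mul, one_mul]

lemma card_range_rho (hm : n * k = m) (hn : n ≠ 0) (hk : k ≠ 0) :
    Nat.card ↥(Set.range (rho n m k hm)) * k.totient = UU k := by
  haveI : NeZero k := ⟨hk⟩
  classical
  set F : {v : ZMod k × ZMod k // IsCoprime v.1 v.2} → ↥(Set.range (rho n m k hm)) :=
    Set.rangeFactorization (rho n m k hm) with hF
  have hfib : ∀ K : ↥(Set.range (rho n m k hm)),
      ((ZMod k)ˣ ≃ {v : {v : ZMod k × ZMod k // IsCoprime v.1 v.2} // F v = K}) := by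
    intro K
    have hKmem : ∃ v, rho n m k hm v = ↑K := Set.mem_range.mp K.2
    set v₀ := hKmem.choose with hv₀def
    have hv₀ : rho n m k hm v₀ = ↑K := hKmem.choose_spec
    have cop : ∀ u : (ZMod k)ˣ, IsCoprime ((↑u : ZMod k) * v₀.1.1) ((↑u : ZMod k) * v₀.1.2) := by
      intro u
      obtain ⟨A, B, hAB⟩ := v₀.2
      refine ⟨A * ↑u⁻¹, B * ↑u⁻¹, ?_⟩
      have huu : ((↑u⁻¹ : ZMod k)) * ↑u = 1 := u.inv_mul
      linear_combination (A * v₀.1.1 + B * v₀.1.2) * huu + hAB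
    set g : (ZMod k)ˣ → {v : {v : ZMod k × ZMod k // IsCoprime v.1 v.2} // F v = K} :=
      fun u => ⟨⟨((↑u : ZMod k) * v₀.1.1, (↑u : ZMod k) * v₀.1.2), cop u⟩, by
        apply Subtype.ext
        show rho n m k hm _ = ↑K
        rw [← hv₀]
        exact (rho_eq_iff n m k hm hn v₀ _).mpr ⟨u, rfl, rfl⟩⟩ with hg
    refine Equiv.ofBijective g ⟨?_, ?_⟩
    · intro u u' huu'
      obtain ⟨A, B, hAB⟩ := v₀.2
      have h1 : (↑u : ZMod k) * v₀.1.1 = ↑u' * v₀.1.1 := by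
        have := congrArg (fun w => w.1.1.1) huu'
        simpa [hg] using this
      have h2 : (↑u : ZMod k) * v₀.1.2 = ↑u' * v₀.1.2 := by
        have := congrArg (fun w => w.1.1.2) huu'
        simpa [hg] using this
      apply Units.ext
      calc (↑u : ZMod k) = A * (↑u * v₀.1.1) + B * (↑u * v₀.1.2) := by
            linear_combination -(↑u : ZMod k) * hAB
        _ = A * (↑u' * v₀.1.1) + B * (↑u' * v₀.1.2) := by rw [h1, h2]
        _ = ↑u' := by linear_combination (↑u' : ZMod k) * hAB
    · rintro ⟨w, hw⟩
      have hww : rho n m k hm w = rho n m k hm v₀ := by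
        rw [hv₀]
        exact congrArg Subtype.val hw
      obtain ⟨c, hc1, hc2⟩ := (rho_eq_iff n m k hm hn v₀ w).mp hww
      refine ⟨c, ?_⟩
      apply Subtype.ext
      apply Subtype.ext
      exact Prod.ext hc1.symm hc2.symm
  have main : Nat.card {v : ZMod k × ZMod k // IsCoprime v.1 v.2} =
      Nat.card (↥(Set.range (rho n m k hm))) * Nat.card ((ZMod k)ˣ) := by
    calc Nat.card {v : ZMod k × ZMod k // IsCoprime v.1 v.2}
        = Nat.card ((K : ↥(Set.range (rho n m k hm))) ×
            {v : {v : ZMod k × ZMod k // IsCoprime v.1 v.2} // F v = K}) :=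
          Nat.card_congr (Equiv.sigmaFiberEquiv F).symm
      _ = Nat.card (↥(Set.range (rho n m k hm)) × (ZMod k)ˣ) :=
          Nat.card_congr ((Equiv.sigmaCongrRight (fun K => (hfib K).symm)).trans
            (Equiv.sigmaEquivProd _ _))
      _ = Nat.card (↥(Set.range (rho n m k hm))) * Nat.card ((ZMod k)ˣ) := Nat.card_prod _ _
  have hu : Nat.card ((ZMod k)ˣ) = k.totient := by
    rw [Nat.card_eq_fintype_card]
    exact ZMod.card_units_eq_totient k
  unfold UU
  rw [main, hu]

lemma exists_unimodular_lift (hm : n * k = m) (hm0 : m ≠ 0) (v1 v2 : ZMod k)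
    (h : IsCoprime v1 v2) :
    ∃ X Y : ℤ, ((X : ZMod k) = v1) ∧ ((Y : ZMod k) = v2) ∧
      ∃ a b : ZMod m, a * (X : ZMod m) + b * (Y : ZMod m) = 1 := by
  classical
  obtain ⟨A, B, hAB⟩ := h
  obtain ⟨x0, hx0⟩ := ZMod.intCast_surjective v1
  obtain ⟨y0, hy0⟩ := ZMod.intCast_surjective v2
  obtain ⟨A0, hA0⟩ := ZMod.intCast_surjective A
  obtain ⟨B0, hB0⟩ := ZMod.intCast_surjective B
  have hcomb : (k : ℤ) ∣ (A0 * x0 + B0 * y0 - 1) := by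
    apply (ZMod.intCast_zmod_eq_zero_iff_dvd _ k).mp
    push_cast
    rw [hx0, hy0, hA0, hB0, hAB]
    ring
  set c : ℕ := ∏ p ∈ m.primeFactors.filter (fun p : ℕ => ¬ ((p : ℤ) ∣ x0)), p with hc
  set X : ℤ := x0 + k * c with hX
  set Y : ℤ := y0 with hY
  set g1 : ℤ := (Int.gcd Y (m : ℤ) : ℤ) with hg1
  have hgcd : Int.gcd X g1 = 1 := by
    by_contra hne
    obtain ⟨p, hp, hpdvd⟩ := Nat.exists_prime_and_dvd hne
    have hpX : (p : ℤ) ∣ X := (Int.natCast_dvd_natCast.mpr hpdvd).trans (Int.gcd_dvd_left _ _)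
    have hpg1 : (p : ℤ) ∣ g1 := (Int.natCast_dvd_natCast.mpr hpdvd).trans (Int.gcd_dvd_right _ _)
    have hpY : (p : ℤ) ∣ Y := hpg1.trans (Int.gcd_dvd_left _ _)
    have hpmZ : (p : ℤ) ∣ (m : ℤ) := hpg1.trans (Int.gcd_dvd_right _ _)
    have hpm : p ∣ m := Int.natCast_dvd_natCast.mp hpmZ
    have hpmem : p ∈ m.primeFactors := Nat.mem_primeFactors.mpr ⟨hp, hpm, hm0⟩
    have hpprime : Prime (p : ℤ) := Int.prime_iff_natAbs_prime.mpr (by simpa using hp)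
    by_cases hpx : (p : ℤ) ∣ x0
    · have hpc : ¬ ((p : ℤ) ∣ (c : ℤ)) := by
        intro hdvd
        have hdvdn : p ∣ c := Int.natCast_dvd_natCast.mp hdvd
        rw [hc] at hdvdn
        obtain ⟨q, hqmem, hpq⟩ := (hp.prime.dvd_finset_prod_iff _).mp hdvdn
        obtain ⟨hqm, hqx⟩ := Finset.mem_filter.mp hqmem
        have hq : q.Prime := Nat.prime_of_mem_primeFactors hqm
        have : p = q := (Nat.prime_dvd_prime_iff_eq hp hq).mp hpq
        subst this
        exact hqx hpx
      have hpkc : (p : ℤ) ∣ (k : ℤ) * c := by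
        have : (p : ℤ) ∣ X - x0 := dvd_sub hpX hpx
        simpa [hX] using this
      have hpk : (p : ℤ) ∣ (k : ℤ) := by
        rcases hpprime.dvd_mul.mp hpkc with h' | h'
        · exact h'
        · exact absurd h' hpc
      have hp1 : (p : ℤ) ∣ 1 := by
        have h5 : (p : ℤ) ∣ (A0 * x0 + B0 * y0 - 1) := hpk.trans hcomb
        have h6 : (p : ℤ) ∣ (A0 * x0 + B0 * y0) :=
          dvd_add (Dvd.dvd.mul_left hpx A0) (Dvd.dvd.mul_left hpY B0)
        have := dvd_sub h6 h5
        simpa using this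
      exact hp.one_lt.ne' (by exact_mod_cast Int.eq_one_of_dvd_one (by positivity) hp1)
    · have hpcmem : p ∈ m.primeFactors.filter (fun p : ℕ => ¬ ((p : ℤ) ∣ x0)) :=
        Finset.mem_filter.mpr ⟨hpmem, hpx⟩
      have hdc : (p : ℕ) ∣ c := Finset.dvd_prod_of_mem _ hpcmem
      have hpkc : (p : ℤ) ∣ (k : ℤ) * c := Dvd.dvd.mul_left (Int.natCast_dvd_natCast.mpr hdc) _
      have : (p : ℤ) ∣ x0 := by
        have := dvd_sub hpX hpkc
        simpa [hX] using this
      exact hpx this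
  have e1 : (1 : ℤ) = X * Int.gcdA X g1 + g1 * Int.gcdB X g1 := by
    have := Int.gcd_eq_gcd_ab X g1
    rw [hgcd] at this
    exact_mod_cast this
  have e2 : g1 = Y * Int.gcdA Y (m : ℤ) + (m : ℤ) * Int.gcdB Y (m : ℤ) := Int.gcd_eq_gcd_ab Y _
  refine ⟨X, Y, ?_, hy0, ?_⟩
  · rw [hX]
    push_cast
    rw [hx0, ZMod.natCast_self]
    ring
  · refine ⟨((Int.gcdA X g1 : ℤ) : ZMod m),
      ((Int.gcdA Y (m : ℤ) * Int.gcdB X g1 : ℤ) : ZMod m), ?_⟩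
    have hZ : (1 : ℤ) = X * Int.gcdA X g1 + Y * (Int.gcdA Y (m : ℤ) * Int.gcdB X g1)
        + (m : ℤ) * (Int.gcdB Y (m : ℤ) * Int.gcdB X g1) := by
      linear_combination e1 + Int.gcdB X g1 * e2
    have := congrArg (fun z : ℤ => (z : ZMod m)) hZ
    push_cast at this
    rw [ZMod.natCast_self] at this
    push_cast
    linear_combination -this

lemma iotaH_castK (hm : n * k = m) (cZ : ZMod m) :
    iotaH n m k hm (castK n m k hm cZ) = (n : ZMod m) * cZ := by
  obtain ⟨C, rfl⟩ := ZMod.intCast_surjective cZ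
  rw [show castK n m k hm ((C : ℤ) : ZMod m) = ((C : ℤ) : ZMod k) from map_intCast _ C,
    iotaH_intCast]
  push_cast
  ring

end P2

section P3

lemma quot_card_eq_range (n m k : ℕ) (hm : n * k = m) (hn : n ≠ 0) (hk : k ≠ 0) :
    Nat.card (Quot (fun x y : {q : (ZMod n × ZMod m) × (ZMod n × ZMod m) //
          AddSubgroup.closure ({q.1, q.2} : Set (ZMod n × ZMod m)) = ⊤} =>
        ∃ σ : AddAut (ZMod n × ZMod m), σ x.1.1 = y.1.1 ∧ σ x.1.2 = y.1.2))
      = Nat.card ↥(Set.range (rho n m k hm)) := by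
  classical
  have hnm : n ∣ m := ⟨k, hm.symm⟩
  have hm0 : m ≠ 0 := by
    rintro rfl
    exact absurd (Nat.mul_eq_zero.mp hm) (by simp [hn, hk])
  haveI : NeZero m := ⟨hm0⟩
  haveI : NeZero n := ⟨hn⟩
  haveI : NeZero k := ⟨hk⟩
  letI instM : Module (ZMod m) (ZMod n) := (ZMod.castHom hnm (ZMod n)).toModule
  set castN : ZMod m →+* ZMod n := ZMod.castHom hnm (ZMod n) with hcastN
  have hsmul1 : ∀ (r : ZMod m) (x : ZMod n), r • x = castN r * x := fun _ _ => rfl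
  have hsmul2 : ∀ (r : ZMod m) (x : ZMod m), r • x = r * x := fun _ _ => rfl
  have hsmulP : ∀ (r : ZMod m) (g : ZMod n × ZMod m), r • g = (castN r * g.1, r * g.2) :=
    fun _ _ => rfl
  -- the linear map attached to a pair
  set fpair : (ZMod n × ZMod m) × (ZMod n × ZMod m) →
      (ZMod m × ZMod m →ₗ[ZMod m] ZMod n × ZMod m) := fun q =>
    LinearMap.coprod (LinearMap.toSpanSingleton (ZMod m) _ q.1)
      (LinearMap.toSpanSingleton (ZMod m) _ q.2) with hfpair
  have hfapp : ∀ (q : (ZMod n × ZMod m) × (ZMod n × ZMod m)) (z : ZMod m × ZMod m),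
      fpair q z = z.1 • q.1 + z.2 • q.2 := by
    intro q z
    simp [hfpair, LinearMap.toSpanSingleton_apply]
  -- surjectivity of fpair vs closure condition
  have hsurj : ∀ q : (ZMod n × ZMod m) × (ZMod n × ZMod m),
      AddSubgroup.closure ({q.1, q.2} : Set (ZMod n × ZMod m)) = ⊤ ↔
        Function.Surjective (fpair q) := by
    intro q
    rw [← LinearMap.range_eq_top]
    have hrange : LinearMap.range (fpair q) =
        Submodule.span (ZMod m) ({q.1, q.2} : Set (ZMod n × ZMod m)) := by
      rw [hfpair]
      rw [LinearMap.range_coprod, ← LinearMap.span_singleton_eq_range,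
        ← LinearMap.span_singleton_eq_range, ← Submodule.span_union]
      congr 1
    rw [hrange]
    constructor
    · intro hcl
      rw [eq_top_iff]
      intro g _
      have hg : g ∈ AddSubgroup.closure ({q.1, q.2} : Set (ZMod n × ZMod m)) := by
        rw [hcl]; trivial
      have hle : AddSubgroup.closure ({q.1, q.2} : Set (ZMod n × ZMod m)) ≤
          (Submodule.span (ZMod m) ({q.1, q.2} : Set (ZMod n × ZMod m))).toAddSubgroup :=
        (AddSubgroup.closure_le _).mpr (by
          rw [Submodule.coe_toAddSubgroup]
          exact Submodule.subset_span)
      exact hle hg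
    · intro hs
      rw [eq_top_iff]
      intro g _
      have hg : g ∈ Submodule.span (ZMod m) ({q.1, q.2} : Set (ZMod n × ZMod m)) := by
        rw [hs]; trivial
      refine Submodule.span_induction
        (p := fun x _ => x ∈ AddSubgroup.closure ({q.1, q.2} : Set (ZMod n × ZMod m)))
        (fun x hx => AddSubgroup.subset_closure hx) (AddSubgroup.zero_mem _)
        (fun x y _ _ hx hy => AddSubgroup.add_mem _ hx hy) ?_ hg
      intro r x _ hx
      obtain ⟨c, rfl⟩ := ZMod.intCast_surjective r
      rw [Int.cast_smul_eq_zsmul]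
      exact AddSubgroup.zsmul_mem _ hx c
  -- automorphisms are linear
  have autlin : ∀ (σ : AddAut (ZMod n × ZMod m)) (r : ZMod m) (g : ZMod n × ZMod m),
      σ (r • g) = r • σ g := by
    intro σ r g
    obtain ⟨c, rfl⟩ := ZMod.intCast_surjective r
    rw [Int.cast_smul_eq_zsmul, Int.cast_smul_eq_zsmul]
    exact map_zsmul σ c g
  set P : Type := {q : (ZMod n × ZMod m) × (ZMod n × ZMod m) //
      AddSubgroup.closure ({q.1, q.2} : Set (ZMod n × ZMod m)) = ⊤} with hPdef
  have wd : ∀ x y : P, (∃ σ : AddAut (ZMod n × ZMod m), σ x.1.1 = y.1.1 ∧ σ x.1.2 = y.1.2) →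
      LinearMap.ker (fpair x.1) = LinearMap.ker (fpair y.1) := by
    rintro x y ⟨σ, h1, h2⟩
    ext z
    simp only [LinearMap.mem_ker]
    have hyz : fpair y.1 z = σ (fpair x.1 z) := by
      rw [hfapp, hfapp, map_add, autlin σ, autlin σ, h1, h2]
    rw [hyz]
    constructor
    · intro h0
      rw [h0]
      exact map_zero σ
    · intro h0
      apply σ.injective
      rw [h0]
      exact (map_zero σ).symm
  set Psi : Quot (fun x y : P =>
      ∃ σ : AddAut (ZMod n × ZMod m), σ x.1.1 = y.1.1 ∧ σ x.1.2 = y.1.2) →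
      Submodule (ZMod m) (ZMod m × ZMod m) :=
    Quot.lift (fun q : P => LinearMap.ker (fpair q.1)) wd with hPsidef
  have hPsi_inj : Function.Injective Psi := by
    intro A B
    induction A using Quot.ind with | _ x => ?_
    induction B using Quot.ind with | _ y => ?_
    intro h
    apply Quot.sound
    have hx := (hsurj x.1).mp x.2
    have hy := (hsurj y.1).mp y.2
    have h' : LinearMap.ker (fpair x.1) = LinearMap.ker (fpair y.1) := h
    set Ex := (fpair x.1).quotKerEquivOfSurjective hx with hExdef
    set Ey := (fpair y.1).quotKerEquivOfSurjective hy with hEydef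
    set E : (ZMod n × ZMod m) ≃ₗ[ZMod m] (ZMod n × ZMod m) :=
      Ex.symm.trans ((Submodule.quotEquivOfEq _ _ h').trans Ey) with hEdef
    have hEx : ∀ z, Ex (Submodule.Quotient.mk z) = fpair x.1 z := fun z => rfl
    have hEy : ∀ z, Ey (Submodule.Quotient.mk z) = fpair y.1 z := fun z => rfl
    have hE : ∀ z, E (fpair x.1 z) = fpair y.1 z := by
      intro z
      have h1 : Ex.symm (fpair x.1 z) = Submodule.Quotient.mk z := by
        rw [LinearEquiv.symm_apply_eq, hEx]
      show Ey ((Submodule.quotEquivOfEq _ _ h') (Ex.symm (fpair x.1 z))) = _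
      rw [h1, Submodule.quotEquivOfEq_mk, hEy]
    refine ⟨E.toAddEquiv, ?_, ?_⟩
    · have h10 : fpair x.1 (1, 0) = x.1.1 := by rw [hfapp]; simp
      have h10y : fpair y.1 (1, 0) = y.1.1 := by rw [hfapp]; simp
      show E x.1.1 = y.1.1
      rw [← h10, hE, h10y]
    · have h01 : fpair x.1 (0, 1) = x.1.2 := by rw [hfapp]; simp
      have h01y : fpair y.1 (0, 1) = y.1.2 := by rw [hfapp]; simp
      show E x.1.2 = y.1.2
      rw [← h01, hE, h01y]
  have hrangePsi : Set.range Psi = Set.range (fun q : P => LinearMap.ker (fpair q.1)) := by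
    have hcomp : (fun q : P => LinearMap.ker (fpair q.1)) = Psi ∘ (Quot.mk _) := rfl
    rw [hcomp, Function.Surjective.range_comp (fun b => Quot.exists_rep b) Psi]
  have hcastN_zero_iff : ∀ cZ : ZMod m, castN cZ = 0 ↔ ∃ t : ZMod m, cZ = (n : ZMod m) * t := by
    intro cZ
    constructor
    · intro h0
      have hv : ((cZ.val : ℕ) : ZMod m) = cZ := ZMod.natCast_rightInverse cZ
      have h1 : ((cZ.val : ℕ) : ZMod n) = 0 := by
        rw [← hv] at h0
        rw [hcastN] at h0
        rwa [map_natCast] at h0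
      have h2 : (n : ℕ) ∣ cZ.val := (ZMod.natCast_eq_zero_iff _ _).mp h1
      obtain ⟨s, hs⟩ := h2
      refine ⟨((s : ℕ) : ZMod m), ?_⟩
      rw [← hv, hs]
      push_cast
      ring
    · rintro ⟨t, rfl⟩
      rw [hcastN, map_mul, map_natCast, ZMod.natCast_self, zero_mul]
  have hforward : ∀ q : P, ∃ v : {v : ZMod k × ZMod k // IsCoprime v.1 v.2},
      LinearMap.ker (fpair q.1) = rho n m k hm v := by
    intro q
    have hx : Function.Surjective (fpair q.1) := (hsurj q.1).mp q.2
    obtain ⟨u, hu⟩ := hx ((0 : ZMod n), (1 : ZMod m))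
    have hbez : ∃ a b : ZMod m, a * u.1 + b * u.2 = 1 := by
      set d : ℕ := Nat.gcd u.1.val (Nat.gcd u.2.val m) with hd
      have hd1 : d ∣ u.1.val := Nat.gcd_dvd_left _ _
      have hd2 : d ∣ u.2.val := (Nat.gcd_dvd_right u.1.val _).trans (Nat.gcd_dvd_left _ _)
      have hdm : d ∣ m := (Nat.gcd_dvd_right u.1.val _).trans (Nat.gcd_dvd_right _ _)
      have hd0 : d ≠ 0 := by
        intro h0
        rw [h0] at hdm
        exact hm0 (Nat.eq_zero_of_zero_dvd hdm)
      have hcomp1 : (m / d) • u.1 = (0 : ZMod m) := by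
        obtain ⟨t, ht⟩ := hd1
        rw [nsmul_eq_mul,
          show u.1 = ((u.1.val : ℕ) : ZMod m) from (ZMod.natCast_rightInverse u.1).symm,
          ← Nat.cast_mul]
        apply (ZMod.natCast_eq_zero_iff _ _).mpr
        rw [ht, ← mul_assoc, Nat.div_mul_cancel hdm]
        exact Dvd.intro t rfl
      have hcomp2 : (m / d) • u.2 = (0 : ZMod m) := by
        obtain ⟨t, ht⟩ := hd2
        rw [nsmul_eq_mul,
          show u.2 = ((u.2.val : ℕ) : ZMod m) from (ZMod.natCast_rightInverse u.2).symm,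
          ← Nat.cast_mul]
        apply (ZMod.natCast_eq_zero_iff _ _).mpr
        rw [ht, ← mul_assoc, Nat.div_mul_cancel hdm]
        exact Dvd.intro t rfl
      have hsmu : (m / d) • u = (0 : ZMod m × ZMod m) := by
        apply Prod.ext
        · rw [Prod.smul_fst, hcomp1]; rfl
        · rw [Prod.smul_snd, hcomp2]; rfl
      have hmd : (m : ℕ) ∣ (m / d) := by
        have h0 := congrArg (fpair q.1) hsmu
        rw [map_nsmul, hu, map_zero] at h0
        have h2 := congrArg Prod.snd h0
        rw [Prod.smul_snd] at h2
        simp only [nsmul_eq_mul, mul_one] at h2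
        exact (ZMod.natCast_eq_zero_iff _ _).mp h2
      have hd_eq : d = 1 := by
        have hmdpos : 0 < m / d :=
          Nat.div_pos (Nat.le_of_dvd (Nat.pos_of_ne_zero hm0) hdm) (Nat.pos_of_ne_zero hd0)
        have hle : m ≤ m / d := Nat.le_of_dvd hmdpos hmd
        have h3 : m / d = m := le_antisymm (Nat.div_le_self m d) hle
        rcases Nat.div_eq_self.mp h3 with h | h
        · exact absurd h hm0
        · exact h
      have e1 := Nat.gcd_eq_gcd_ab u.1.val (Nat.gcd u.2.val m)
      have e2 := Nat.gcd_eq_gcd_ab u.2.val m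
      have heq1 : ((Nat.gcd u.1.val (Nat.gcd u.2.val m) : ℕ) : ℤ) = 1 := by
        rw [← hd, hd_eq]; norm_num
      refine ⟨((Nat.gcdA u.1.val (Nat.gcd u.2.val m) : ℤ) : ZMod m),
        ((Nat.gcdA u.2.val m * Nat.gcdB u.1.val (Nat.gcd u.2.val m) : ℤ) : ZMod m), ?_⟩
      have hZ : (1 : ℤ) = (u.1.val : ℤ) * Nat.gcdA u.1.val (Nat.gcd u.2.val m)
          + (u.2.val : ℤ) * (Nat.gcdA u.2.val m * Nat.gcdB u.1.val (Nat.gcd u.2.val m))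
          + (m : ℤ) * (Nat.gcdB u.2.val m * Nat.gcdB u.1.val (Nat.gcd u.2.val m)) := by
        linear_combination (-1 : ℤ) * heq1 + e1 + Nat.gcdB u.1.val (Nat.gcd u.2.val m) * e2
      have hcast := congrArg (fun z : ℤ => (z : ZMod m)) hZ
      push_cast at hcast
      rw [ZMod.natCast_self, ZMod.natCast_val, ZMod.natCast_val, ZMod.cast_id, ZMod.cast_id]
        at hcast
      rw [mul_comm u.1 _, mul_comm u.2 _] at hcast
      push_cast
      linear_combination -hcast
    obtain ⟨a, b, hab⟩ := hbez
    set w : ZMod m × ZMod m := (-b, a) with hw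
    set gg : ZMod n × ZMod m := fpair q.1 w with hgg
    set v₀ : ZMod m × ZMod m := w - gg.2 • u with hv₀
    -- coordinates
    have hcoord : ∀ z : ZMod m × ZMod m,
        z = (a * z.1 + b * z.2) • u + (u.1 * z.2 - u.2 * z.1) • w := by
      intro z
      apply Prod.ext
      · simp only [Prod.fst_add, Prod.smul_fst, smul_eq_mul, hw]
        linear_combination -z.1 * hab
      · simp only [Prod.snd_add, Prod.smul_snd, smul_eq_mul, hw]
        linear_combination -z.2 * hab
    -- gg.1 is a unit
    have hg1unit : IsUnit gg.1 := by
      obtain ⟨z0, hz0⟩ := hx ((1 : ZMod n), (0 : ZMod m))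
      have h0 : fpair q.1 z0 = (a * z0.1 + b * z0.2) • ((0 : ZMod n), (1 : ZMod m))
          + (u.1 * z0.2 - u.2 * z0.1) • gg := by
        conv_lhs => rw [hcoord z0]
        rw [map_add, map_smul, map_smul, hu]
      rw [hz0] at h0
      have h1 := congrArg Prod.fst h0
      simp only [Prod.fst_add, Prod.smul_fst, hsmul1, mul_zero, zero_add] at h1
      exact IsUnit.of_mul_eq_one _ (mul_comm (castN (u.1 * z0.2 - u.2 * z0.1)) gg.1 ▸ h1.symm)
    -- the kernel is spanned by n • v₀
    have hkerv : LinearMap.ker (fpair q.1) =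
        Submodule.span (ZMod m) {(n : ZMod m) • v₀} := by
      apply le_antisymm
      · intro z hz
        rw [LinearMap.mem_ker] at hz
        have h0 : (0 : ZMod n × ZMod m) = (a * z.1 + b * z.2) • ((0 : ZMod n), (1 : ZMod m))
            + (u.1 * z.2 - u.2 * z.1) • gg := by
          rw [← hz]
          conv_lhs => rw [hcoord z]
          rw [map_add, map_smul, map_smul, hu]
        have h1 := congrArg Prod.fst h0
        have h2 := congrArg Prod.snd h0
        simp only [Prod.fst_add, Prod.snd_add, Prod.smul_fst, Prod.smul_snd, Prod.fst_zero,
          Prod.snd_zero, hsmul1, hsmul2, mul_zero, zero_add, mul_one] at h1 h2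
        -- h1 : 0 = castN (u.1*z.2 - u.2*z.1) * gg.1 ; h2 : 0 = (a*z.1+b*z.2) + (u.1*z.2-u.2*z.1)*gg.2
        have hc2 : castN (u.1 * z.2 - u.2 * z.1) = 0 := by
          obtain ⟨gu, hgu⟩ := hg1unit
          have hthis := h1.symm
          calc castN (u.1 * z.2 - u.2 * z.1)
              = (castN (u.1 * z.2 - u.2 * z.1) * gg.1) * ↑gu⁻¹ := by
                rw [mul_assoc, ← hgu, Units.mul_inv, mul_one]
            _ = 0 := by rw [hthis, zero_mul]
        obtain ⟨t, ht⟩ := (hcastN_zero_iff _).mp hc2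
        rw [Submodule.mem_span_singleton]
        refine ⟨t, ?_⟩
        have hc1 : a * z.1 + b * z.2 = -((u.1 * z.2 - u.2 * z.1) * gg.2) := by
          linear_combination -h2
        have hzv : z = (u.1 * z.2 - u.2 * z.1) • v₀ := by
          rw [hv₀, smul_sub, smul_smul]
          conv_lhs => rw [hcoord z, hc1]
          rw [neg_smul]
          abel
        rw [hzv, ht, smul_smul, mul_comm]
      · rw [Submodule.span_le, Set.singleton_subset_iff]
        have : fpair q.1 ((n : ZMod m) • v₀) = 0 := by
          rw [map_smul, hv₀, map_sub, map_smul, hu, ← hgg]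
          have hsub : gg - gg.2 • ((0 : ZMod n), (1 : ZMod m)) = (gg.1, 0) := by
            apply Prod.ext
            · simp [hsmul1]
            · simp [hsmul2]
          rw [hsub]
          apply Prod.ext
          · rw [Prod.smul_fst, hsmul1, hcastN, map_natCast, ZMod.natCast_self, zero_mul]
            rfl
          · rw [Prod.smul_snd, hsmul2, mul_zero]
            rfl
        exact LinearMap.mem_ker.mpr this
    -- identify with rho
    have hvcop : IsCoprime (castK n m k hm v₀.1) (castK n m k hm v₀.2) := by
      have hdet : u.1 * v₀.2 - u.2 * v₀.1 = 1 := by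
        rw [hv₀]
        simp only [Prod.fst_sub, Prod.snd_sub, Prod.smul_fst, Prod.smul_snd, smul_eq_mul, hw]
        linear_combination hab
      refine ⟨-(castK n m k hm u.2), castK n m k hm u.1, ?_⟩
      have := congrArg (castK n m k hm) hdet
      rw [map_sub, map_mul, map_mul, map_one] at this
      linear_combination this
    refine ⟨⟨(castK n m k hm v₀.1, castK n m k hm v₀.2), hvcop⟩, ?_⟩
    rw [hkerv]
    unfold rho
    rw [iotaH_castK, iotaH_castK]
    have hps : (n : ZMod m) • v₀ = ((n : ZMod m) * v₀.1, (n : ZMod m) * v₀.2) :=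
      Prod.ext (by rw [Prod.smul_fst, smul_eq_mul]) (by rw [Prod.smul_snd, smul_eq_mul])
    rw [hps]
  have hbackward : ∀ v : {v : ZMod k × ZMod k // IsCoprime v.1 v.2},
      ∃ q : P, LinearMap.ker (fpair q.1) = rho n m k hm v := by
    intro v
    obtain ⟨X, Y, hX, hY, a, b, hab⟩ := exists_unimodular_lift n m k hm hm0 v.1.1 v.1.2 v.2
    set U : ZMod m × ZMod m := ((X : ZMod m), (Y : ZMod m)) with hU
    set xp : (ZMod n × ZMod m) × (ZMod n × ZMod m) :=
      ((castN a, -(Y : ZMod m)), (castN b, (X : ZMod m))) with hxp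
    have happ : ∀ z : ZMod m × ZMod m,
        fpair xp z = (castN (a * z.1 + b * z.2), U.1 * z.2 - U.2 * z.1) := by
      intro z
      rw [hfapp]
      apply Prod.ext
      · simp only [hxp, Prod.fst_add, Prod.smul_fst, hsmul1]
        rw [← map_mul, ← map_mul, ← map_add]
        congr 1
        ring
      · simp only [hxp, hU, Prod.snd_add, Prod.smul_snd, hsmul2]
        ring
    have hsurj_x : Function.Surjective (fpair xp) := by
      intro t
      refine ⟨(((t.1.val : ℕ) : ZMod m) * U.1 - t.2 * b,
        ((t.1.val : ℕ) : ZMod m) * U.2 + t.2 * a), ?_⟩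
      rw [happ]
      have harg : a * (((t.1.val : ℕ) : ZMod m) * U.1 - t.2 * b)
          + b * (((t.1.val : ℕ) : ZMod m) * U.2 + t.2 * a)
          = ((t.1.val : ℕ) : ZMod m) := by
        linear_combination ((t.1.val : ℕ) : ZMod m) * hab
      apply Prod.ext
      · show castN _ = t.1
        rw [harg, hcastN, map_natCast]
        exact ZMod.natCast_rightInverse t.1
      · show U.1 * _ - U.2 * _ = t.2
        linear_combination t.2 * hab
    have hclos : AddSubgroup.closure ({xp.1, xp.2} : Set (ZMod n × ZMod m)) = ⊤ :=
      (hsurj xp).mpr hsurj_x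
    refine ⟨⟨xp, hclos⟩, ?_⟩
    have hgen : (iotaH n m k hm v.1.1, iotaH n m k hm v.1.2) = (n : ZMod m) • U := by
      apply Prod.ext
      · rw [← hX, iotaH_intCast, Prod.smul_fst, smul_eq_mul]
        push_cast
        ring
      · rw [← hY, iotaH_intCast, Prod.smul_snd, smul_eq_mul]
        push_cast
        ring
    unfold rho
    rw [hgen]
    apply le_antisymm
    · intro z hz
      rw [LinearMap.mem_ker, happ] at hz
      have h1 := congrArg Prod.fst hz
      have h2 := congrArg Prod.snd hz
      simp only [Prod.fst_zero, Prod.snd_zero] at h1 h2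
      obtain ⟨t, ht⟩ := (hcastN_zero_iff _).mp h1
      rw [Submodule.mem_span_singleton]
      refine ⟨t, ?_⟩
      have hcoordz : z = (a * z.1 + b * z.2) • U
          + (U.1 * z.2 - U.2 * z.1) • ((-b, a) : ZMod m × ZMod m) := by
        apply Prod.ext
        · simp only [Prod.fst_add, Prod.smul_fst, smul_eq_mul]
          linear_combination -z.1 * hab
        · simp only [Prod.snd_add, Prod.smul_snd, smul_eq_mul]
          linear_combination -z.2 * hab
      rw [hcoordz, h2, zero_smul, add_zero, ht, smul_smul, mul_comm]
    · rw [Submodule.span_le, Set.singleton_subset_iff]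
      apply LinearMap.mem_ker.mpr
      rw [map_smul, happ]
      have hval : ((castN (a * U.1 + b * U.2), U.1 * U.2 - U.2 * U.1) : ZMod n × ZMod m)
          = ((1 : ZMod n), (0 : ZMod m)) := by
        apply Prod.ext
        · show castN _ = 1
          rw [hab, map_one]
        · show U.1 * U.2 - U.2 * U.1 = 0
          ring
      rw [hval]
      apply Prod.ext
      · rw [Prod.smul_fst, hsmul1, hcastN, map_natCast, ZMod.natCast_self, zero_mul]
        rfl
      · rw [Prod.smul_snd, hsmul2, mul_zero]
        rfl
  have hrange_eq : Set.range (fun q : P => LinearMap.ker (fpair q.1)) =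
      Set.range (rho n m k hm) := by
    apply Set.eq_of_subset_of_subset
    · rintro K ⟨q, rfl⟩
      obtain ⟨v, hv⟩ := hforward q
      exact ⟨v, hv.symm⟩
    · rintro K ⟨v, rfl⟩
      obtain ⟨q, hq⟩ := hbackward v
      exact ⟨q, hq⟩
  exact Nat.card_congr ((Equiv.ofInjective Psi hPsi_inj).trans
    (Equiv.setCongr (hrangePsi.trans hrange_eq)))


end P3

/-- For `1 ≤ n ≤ m` with `n ∣ m`, the number `N` of orbits of `Aut(G)` on
generating pairs of `G = ℤ_n ⊕ ℤ_m` equals the Dedekind totient `ψ(m/n)`; equivalently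
`N · ∏_{p ∣ m/n} p = (m/n) · ∏_{p ∣ m/n} (p + 1)` (products over prime divisors). -/
theorem stmt13 (n m : ℕ) (h1 : 1 ≤ n) (hle : n ≤ m) (hnm : n ∣ m) :
    (Nat.card (Quot (fun x y : {q : (ZMod n × ZMod m) × (ZMod n × ZMod m) //
          AddSubgroup.closure ({q.1, q.2} : Set (ZMod n × ZMod m)) = ⊤} =>
        ∃ σ : AddAut (ZMod n × ZMod m), σ x.1.1 = y.1.1 ∧ σ x.1.2 = y.1.2))) *
        ∏ p ∈ (m / n).primeFactors, p =
      (m / n) * ∏ p ∈ (m / n).primeFactors, (p + 1) := by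
  set k := m / n with hkdef
  have hm : n * k = m := Nat.mul_div_cancel' hnm
  have hn : n ≠ 0 := by omega
  have hk0 : k ≠ 0 := by
    intro h0
    rw [h0, mul_zero] at hm
    omega
  rw [quot_card_eq_range n m k hm hn hk0]
  have h2 := card_range_rho n m k hm hn hk0
  have h3 := keyArith k
  have hφ : 0 < k.totient := Nat.totient_pos.mpr (Nat.pos_of_ne_zero hk0)
  apply Nat.eq_of_mul_eq_mul_left hφ
  calc k.totient * (Nat.card ↥(Set.range (rho n m k hm)) * ∏ p ∈ k.primeFactors, p)
      = (Nat.card ↥(Set.range (rho n m k hm)) * k.totient) * ∏ p ∈ k.primeFactors, p := by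
        ring
    _ = UU k * ∏ p ∈ k.primeFactors, p := by rw [h2]
    _ = k.totient * (k * ∏ p ∈ k.primeFactors, (p + 1)) := h3
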